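/- For α ∈ (0,2) and x > 0, the principal-value integral p.v.∫₀^∞ (1 − z^β)/|1−z|^{α+1} dz over z ∈ (0,∞) with β ∈ (−1, α) exists (the limit as ε → 0⁺ of the integral over {z > 0 : |z−1| ≥ ε} exists and is finite), and equals −γ(α,β) where γ(α,β) = ∫₀^1 (t^β − 1)(1 − t^{α−β−1})/(1−t)^{α+1} dt; moreover γ(α,β) ≤ 0 when β(α−β−1) ≥ 0. -/

import Mathlib

open MeasureTheory Set Real


lemma aux_lip (p : ℝ) : ∃ C : ℝ, 0 ≤ C ∧ ∀ t ∈ Set.Icc (1/2 : ℝ) 1, |t ^ p - 1| ≤ C * (1 - t) := by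
  set C : ℝ := |p| * ((1/2 : ℝ) ^ (p - 1) + 1) with hC
  refine ⟨C, by positivity, fun t ht => ?_⟩
  have hder : ∀ x ∈ Set.Icc (1/2:ℝ) 1,
      HasDerivWithinAt (fun y : ℝ => y ^ p) (p * x ^ (p-1)) (Set.Icc (1/2:ℝ) 1) x := by
    intro x hx
    exact (Real.hasDerivAt_rpow_const (Or.inl (by linarith [hx.1] : x ≠ 0))).hasDerivWithinAt
  have hbound : ∀ x ∈ Set.Icc (1/2:ℝ) 1, ‖p * x ^ (p-1)‖ ≤ C := by
    intro x hx
    have hx0 : (0:ℝ) < x := by linarith [hx.1]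
    have hxp : x ^ (p-1) ≤ (1/2:ℝ) ^ (p - 1) + 1 := by
      rcases le_or_gt 0 (p - 1) with h | h
      · have : x ^ (p-1) ≤ 1 := Real.rpow_le_one hx0.le hx.2 h
        have : (0:ℝ) ≤ (1/2:ℝ) ^ (p-1) := by positivity
        linarith
      · have : x ^ (p-1) ≤ (1/2:ℝ) ^ (p-1) :=
          Real.rpow_le_rpow_of_nonpos (by norm_num) hx.1 h.le
        linarith
    rw [norm_mul, Real.norm_eq_abs, Real.norm_eq_abs, abs_of_nonneg (Real.rpow_nonneg hx0.le _)]
    calc |p| * x ^ (p-1) ≤ |p| * ((1/2:ℝ) ^ (p-1) + 1) :=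
          mul_le_mul_of_nonneg_left hxp (abs_nonneg p)
      _ = C := rfl
  have h1 : (1:ℝ) ∈ Set.Icc (1/2:ℝ) 1 := by norm_num
  have := Convex.norm_image_sub_le_of_norm_hasDerivWithin_le hder hbound (convex_Icc _ _) h1 ht
  simp only [Real.one_rpow, Real.norm_eq_abs] at this
  calc |t ^ p - 1| ≤ C * |t - 1| := this
    _ = C * (1 - t) := by rw [abs_of_nonpos (by linarith [ht.2])]; ring

lemma aux_int_rpow {p c : ℝ} (hp : -1 < p) (hc : 0 ≤ c) :
    IntegrableOn (fun t : ℝ => t ^ p) (Ioc 0 c) := by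
  have := intervalIntegral.intervalIntegrable_rpow' hp (a := 0) (b := c)
  rwa [intervalIntegrable_iff_integrableOn_Ioc_of_le hc] at this

lemma aux_int_one_sub (α : ℝ) (hα2 : α < 2) :
    IntegrableOn (fun t : ℝ => (1 - t) ^ (1 - α)) (Ioc (1/2 : ℝ) 1) := by
  have h := (intervalIntegral.intervalIntegrable_rpow' (by linarith : (-1:ℝ) < 1 - α) (a := 0) (b := 1/2)).comp_sub_left 1
  norm_num at h
  have h2 := h.symm
  rwa [intervalIntegrable_iff_integrableOn_Ioc_of_le (by norm_num)] at h2

lemma aux_int_h2 (α β c : ℝ) (hα0 : 0 < α) (hβα : β < α) (hc0 : 0 ≤ c) (hc : c < 1) :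
    IntegrableOn (fun t : ℝ => (t ^ (α-1) - t ^ (α-β-1)) / (1-t) ^ (α+1)) (Ioc 0 c) := by
  have hmeas : Measurable (fun t : ℝ => (t ^ (α-1) - t ^ (α-β-1)) / (1-t) ^ (α+1)) := by fun_prop
  apply Integrable.mono' (g := fun t => ((1-c) ^ (α+1))⁻¹ * (t ^ (α-1) + t ^ (α-β-1)))
  · exact (((aux_int_rpow (by linarith) hc0).add (aux_int_rpow (by linarith) hc0)).const_mul _)
  · exact hmeas.aestronglyMeasurable
  · refine ae_restrict_of_forall_mem measurableSet_Ioc fun t ht => ?_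
    have ht0 : (0:ℝ) < t := ht.1
    have h1t : (0:ℝ) < 1 - c := by linarith
    have hden : (1-c) ^ (α+1) ≤ (1-t) ^ (α+1) :=
      Real.rpow_le_rpow h1t.le (by linarith [ht.2]) (by linarith)
    have hdenpos : (0:ℝ) < (1-c) ^ (α+1) := Real.rpow_pos_of_pos h1t _
    have hnum : |t ^ (α-1) - t ^ (α-β-1)| ≤ t ^ (α-1) + t ^ (α-β-1) := by
      have := Real.rpow_nonneg ht0.le (α-1)
      have := Real.rpow_nonneg ht0.le (α-β-1)
      rw [abs_sub_le_iff]; constructor <;> linarith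
    rw [Real.norm_eq_abs, abs_div, abs_of_nonneg (Real.rpow_nonneg (by linarith [ht.2] : (0:ℝ) ≤ 1 - t) _)]
    calc |t ^ (α-1) - t ^ (α-β-1)| / (1-t) ^ (α+1)
        ≤ (t ^ (α-1) + t ^ (α-β-1)) / (1-c) ^ (α+1) := by
          apply div_le_div₀ (by positivity) hnum hdenpos hden
      _ = ((1-c) ^ (α+1))⁻¹ * (t ^ (α-1) + t ^ (α-β-1)) := by ring

lemma aux_int_g (α β : ℝ) (hα0 : 0 < α) (hα2 : α < 2) (hβ : -1 < β) (hβα : β < α) :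
    IntegrableOn (fun t : ℝ => (t ^ β - 1) * (1 - t ^ (α-β-1)) / (1-t) ^ (α+1)) (Ioo 0 1) := by
  have hmeas : Measurable (fun t : ℝ => (t ^ β - 1) * (1 - t ^ (α-β-1)) / (1-t) ^ (α+1)) := by
    fun_prop
  have hsub : Ioo (0:ℝ) 1 ⊆ Ioc 0 (1/2) ∪ Ioc (1/2) 1 := by
    rw [Set.Ioc_union_Ioc_eq_Ioc (by norm_num) (by norm_num)]
    exact Set.Ioo_subset_Ioc_self
  refine IntegrableOn.mono_set (IntegrableOn.union ?_ ?_) hsub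
  · -- on Ioc 0 (1/2)
    apply Integrable.mono'
      (g := fun t => 2 ^ (α+1) * (t ^ β + t ^ (α-1) + 1 + t ^ (α-β-1)))
    · refine Integrable.const_mul ?_ _
      have h1 := aux_int_rpow (p := β) hβ (by norm_num : (0:ℝ) ≤ 1/2)
      have h2 := aux_int_rpow (p := α - 1) (by linarith) (by norm_num : (0:ℝ) ≤ 1/2)
      have h3 := aux_int_rpow (p := α - β - 1) (by linarith) (by norm_num : (0:ℝ) ≤ 1/2)
      have h4 : IntegrableOn (fun _ : ℝ => (1:ℝ)) (Ioc 0 (1/2)) := by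
        rw [integrableOn_const_iff]; right; simp
      exact ((h1.add h2).add h4).add h3
    · exact hmeas.aestronglyMeasurable
    · refine ae_restrict_of_forall_mem measurableSet_Ioc fun t ht => ?_
      have ht0 : (0:ℝ) < t := ht.1
      have ht1 : t ≤ 1/2 := ht.2
      have hb : (0:ℝ) ≤ t ^ β := Real.rpow_nonneg ht0.le _
      have hab : (0:ℝ) ≤ t ^ (α-β-1) := Real.rpow_nonneg ht0.le _
      have hnum : |(t ^ β - 1) * (1 - t ^ (α-β-1))| ≤ t ^ β + t ^ (α-1) + 1 + t ^ (α-β-1) := by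
        rw [abs_mul]
        have e1 : |t ^ β - 1| ≤ t ^ β + 1 := by rw [abs_sub_le_iff]; constructor <;> linarith
        have e2 : |1 - t ^ (α-β-1)| ≤ 1 + t ^ (α-β-1) := by
          rw [abs_sub_le_iff]; constructor <;> linarith
        calc |t ^ β - 1| * |1 - t ^ (α-β-1)| ≤ (t ^ β + 1) * (1 + t ^ (α-β-1)) := by
              apply mul_le_mul e1 e2 (abs_nonneg _) (by positivity)
          _ = t ^ β + t ^ β * t ^ (α-β-1) + 1 + t ^ (α-β-1) := by ring
          _ = t ^ β + t ^ (α-1) + 1 + t ^ (α-β-1) := by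
              rw [← Real.rpow_add ht0]; ring_nf
      have hden : ((1:ℝ)/2) ^ (α+1) ≤ (1-t) ^ (α+1) :=
        Real.rpow_le_rpow (by norm_num) (by linarith) (by linarith)
      have hdenpos : (0:ℝ) < ((1:ℝ)/2) ^ (α+1) := by positivity
      rw [Real.norm_eq_abs, abs_div,
        abs_of_nonneg (Real.rpow_nonneg (by linarith : (0:ℝ) ≤ 1 - t) _)]
      calc |(t ^ β - 1) * (1 - t ^ (α-β-1))| / (1-t) ^ (α+1)
          ≤ (t ^ β + t ^ (α-1) + 1 + t ^ (α-β-1)) / ((1:ℝ)/2) ^ (α+1) := by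
            apply div_le_div₀ (by positivity) hnum hdenpos hden
        _ = 2 ^ (α+1) * (t ^ β + t ^ (α-1) + 1 + t ^ (α-β-1)) := by
            rw [div_eq_inv_mul, ← Real.inv_rpow (by norm_num : (0:ℝ) ≤ 1/2)]
            norm_num
  · -- on Ioc (1/2) 1
    obtain ⟨C₁, hC₁0, hC₁⟩ := aux_lip β
    obtain ⟨C₂, hC₂0, hC₂⟩ := aux_lip (α - β - 1)
    apply Integrable.mono' (g := fun t => (C₁ * C₂) * (1-t) ^ (1-α))
    · exact (aux_int_one_sub α hα2).const_mul _
    · exact hmeas.aestronglyMeasurable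
    · refine ae_restrict_of_forall_mem measurableSet_Ioc fun t ht => ?_
      have htIcc : t ∈ Set.Icc (1/2:ℝ) 1 := ⟨ht.1.le, ht.2⟩
      have h1 := hC₁ t htIcc
      have h2' := hC₂ t htIcc
      have h2 : |1 - t ^ (α-β-1)| ≤ C₂ * (1 - t) := by rwa [abs_sub_comm]
      have ht1 : (0:ℝ) ≤ 1 - t := by linarith [ht.2]
      rw [Real.norm_eq_abs, abs_div, abs_mul,
        abs_of_nonneg (Real.rpow_nonneg ht1 _)]
      rcases eq_or_lt_of_le ht.2 with rfl | htlt
      · simp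
        positivity
      · have ht1' : (0:ℝ) < 1 - t := by linarith
        calc |t ^ β - 1| * |1 - t ^ (α-β-1)| / (1-t) ^ (α+1)
            ≤ (C₁ * (1-t)) * (C₂ * (1-t)) / (1-t) ^ (α+1) := by
              gcongr
          _ = (C₁*C₂) * ((1-t)^(2:ℕ) / (1-t) ^ (α+1)) := by ring
          _ = (C₁*C₂) * (1-t) ^ (1-α) := by
              rw [← Real.rpow_natCast (1-t) 2, ← Real.rpow_sub ht1',
                show ((2:ℕ):ℝ) - (α+1) = 1-α by push_cast; ring]

lemma aux_int_f_Ioc (α β ε : ℝ) (hα0 : 0 < α) (hβ : -1 < β) (hε0 : 0 < ε) (hε1 : ε < 1) :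
    IntegrableOn (fun z : ℝ => (1 - z ^ β) / |1 - z| ^ (α+1)) (Ioc 0 (1-ε)) := by
  apply Integrable.mono' (g := fun z => (ε ^ (α+1))⁻¹ * (1 + z ^ β))
  · refine Integrable.const_mul ?_ _
    have h1 : IntegrableOn (fun _ : ℝ => (1:ℝ)) (Ioc 0 (1-ε)) := by
      rw [integrableOn_const_iff]; right; simp
    exact h1.add (aux_int_rpow hβ (by linarith))
  · exact (by fun_prop : Measurable fun z : ℝ => (1 - z ^ β) / |1 - z| ^ (α+1)).aestronglyMeasurable
  · refine ae_restrict_of_forall_mem measurableSet_Ioc fun z hz => ?_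
    have hz0 : (0:ℝ) < z := hz.1
    have hzb : (0:ℝ) ≤ z ^ β := Real.rpow_nonneg hz0.le _
    have habs : |1 - z| = 1 - z := abs_of_nonneg (by linarith [hz.2])
    have hden : ε ^ (α+1) ≤ |1 - z| ^ (α+1) := by
      rw [habs]; exact Real.rpow_le_rpow hε0.le (by linarith [hz.2]) (by linarith)
    rw [Real.norm_eq_abs, abs_div, abs_of_nonneg (Real.rpow_nonneg (abs_nonneg _) _)]
    calc |1 - z ^ β| / |1 - z| ^ (α+1) ≤ (1 + z ^ β) / ε ^ (α+1) := by
          apply div_le_div₀ (by positivity) ?_ (by positivity) hden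
          rw [abs_sub_le_iff]; constructor <;> linarith
      _ = (ε ^ (α+1))⁻¹ * (1 + z ^ β) := by ring

lemma aux_int_f_Ioi (α β ε : ℝ) (hα0 : 0 < α) (hβα : β < α) (hε0 : 0 < ε) :
    IntegrableOn (fun z : ℝ => (1 - z ^ β) / |1 - z| ^ (α+1)) (Ioi (1+ε)) := by
  set m : ℝ := max β 0 with hm
  have hmα : m < α := max_lt hβα hα0
  have hc0 : (0:ℝ) < ε / (1+ε) := by positivity
  apply Integrable.mono' (g := fun z => (2 * ((ε/(1+ε)) ^ (α+1))⁻¹) * z ^ (m - (α+1)))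
  · exact (integrableOn_Ioi_rpow_of_lt (by linarith) (by linarith : (0:ℝ) < 1+ε)).const_mul _
  · exact (by fun_prop : Measurable fun z : ℝ => (1 - z ^ β) / |1 - z| ^ (α+1)).aestronglyMeasurable
  · refine ae_restrict_of_forall_mem measurableSet_Ioi fun z hz => ?_
    have hz1 : (1:ℝ) ≤ z := by have := mem_Ioi.mp hz; linarith
    have hz0 : (0:ℝ) < z := by linarith
    have hnum : |1 - z ^ β| ≤ 2 * z ^ m := by
      have e1 : (1:ℝ) ≤ z ^ m := by
        have := Real.rpow_le_rpow_of_exponent_le hz1 (le_max_right β 0)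
        rwa [Real.rpow_zero] at this
      have e2 : z ^ β ≤ z ^ m := Real.rpow_le_rpow_of_exponent_le hz1 (le_max_left β 0)
      have e3 : (0:ℝ) ≤ z ^ β := Real.rpow_nonneg hz0.le _
      rw [abs_sub_le_iff]; constructor <;> linarith
    have habs : |1 - z| = z - 1 := by rw [abs_sub_comm]; exact abs_of_nonneg (by linarith)
    have hlow : (ε/(1+ε)) * z ≤ z - 1 := by
      rw [div_mul_eq_mul_div, div_le_iff₀ (by linarith : (0:ℝ) < 1+ε)]
      nlinarith [mem_Ioi.mp hz]
    have hden : (ε/(1+ε)) ^ (α+1) * z ^ (α+1) ≤ |1 - z| ^ (α+1) := by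
      rw [habs, ← Real.mul_rpow hc0.le hz0.le]
      exact Real.rpow_le_rpow (by positivity) hlow (by positivity)
    rw [Real.norm_eq_abs, abs_div, abs_of_nonneg (Real.rpow_nonneg (abs_nonneg _) _)]
    calc |1 - z ^ β| / |1 - z| ^ (α+1)
        ≤ (2 * z ^ m) / ((ε/(1+ε)) ^ (α+1) * z ^ (α+1)) :=
          div_le_div₀ (by positivity) hnum (by positivity) hden
      _ = (2 * ((ε/(1+ε)) ^ (α+1))⁻¹) * (z ^ m / z ^ (α+1)) := by ring
      _ = (2 * ((ε/(1+ε)) ^ (α+1))⁻¹) * z ^ (m - (α+1)) := by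
          rw [← Real.rpow_sub hz0]

lemma aux_h2_eq (α β : ℝ) {x : ℝ} (hx0 : 0 < x) (hx1 : x < 1) :
    x ^ (-1-1 : ℝ) * ((1 - (x⁻¹) ^ β) / |1 - x⁻¹| ^ (α+1))
      = (x ^ (α-1) - x ^ (α-β-1)) / (1-x) ^ (α+1) := by
  have h1x : (0:ℝ) < 1 - x := by linarith
  have hinv1 : (1:ℝ) ≤ x⁻¹ := (one_le_inv₀ hx0).mpr hx1.le
  have e2 : |1 - x⁻¹| = (1-x) * x⁻¹ := by
    rw [abs_of_nonpos (by linarith)]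
    field_simp
    ring
  rw [Real.inv_rpow hx0.le β, ← Real.rpow_neg hx0.le β, e2,
    Real.mul_rpow h1x.le (inv_nonneg.mpr hx0.le), Real.inv_rpow hx0.le,
    ← Real.rpow_neg hx0.le]
  have hxne : ∀ p : ℝ, x ^ p ≠ 0 := fun p => (Real.rpow_pos_of_pos hx0 p).ne'
  have h1xne : (1-x) ^ (α+1) ≠ 0 := (Real.rpow_pos_of_pos h1x _).ne'
  rw [← mul_div_assoc, div_eq_div_iff (by exact mul_ne_zero h1xne (hxne _)) h1xne]
  have collect : ∀ p q : ℝ, x ^ p * x ^ q = x ^ (p + q) := fun p q => (Real.rpow_add hx0 p q).symm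
  calc x ^ (-1-1:ℝ) * (1 - x ^ (-β)) * (1-x) ^ (α+1)
      = (x ^ (-1-1:ℝ) - x ^ (-1-1:ℝ) * x ^ (-β)) * (1-x) ^ (α+1) := by ring
    _ = (x ^ (-1-1:ℝ) - x ^ (-1-1 + -β)) * (1-x) ^ (α+1) := by rw [collect]
    _ = (x ^ (α-1) - x ^ (α-β-1)) * ((1-x) ^ (α+1) * x ^ (-(α+1))) := by
        have c1 : x ^ (α-1) * x ^ (-(α+1)) = x ^ (-1-1:ℝ) := by
          rw [collect]; congr 1; ring
        have c2 : x ^ (α-β-1) * x ^ (-(α+1)) = x ^ (-1-1 + -β) := by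
          rw [collect]; congr 1; ring
        rw [← c1, ← c2]; ring

lemma aux_subst (α β ε : ℝ) (hε0 : 0 < ε) :
    ∫ z in Ioi (1+ε), (1 - z ^ β) / |1 - z| ^ (α+1)
      = ∫ t in Ioo (0:ℝ) (1+ε)⁻¹, (t ^ (α-1) - t ^ (α-β-1)) / (1-t) ^ (α+1) := by
  set f : ℝ → ℝ := fun z => (1 - z ^ β) / |1 - z| ^ (α+1) with hf
  set F : ℝ → ℝ := (Ioi (1+ε)).indicator f with hF
  have key := integral_comp_rpow_Ioi F (p := (-1:ℝ)) (by norm_num)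
  have hR : ∫ y in Ioi (0:ℝ), F y = ∫ z in Ioi (1+ε), f z := by
    rw [hF, setIntegral_indicator measurableSet_Ioi, Set.Ioi_inter_Ioi,
      max_eq_right (by linarith : (0:ℝ) ≤ 1+ε)]
  have hL : (∫ x in Ioi (0:ℝ), (|(-1:ℝ)| * x ^ ((-1:ℝ) - 1)) • F (x ^ (-1:ℝ)))
      = ∫ t in Ioo (0:ℝ) (1+ε)⁻¹, (t ^ (α-1) - t ^ (α-β-1)) / (1-t) ^ (α+1) := by
    rw [show (∫ t in Ioo (0:ℝ) (1+ε)⁻¹, (t ^ (α-1) - t ^ (α-β-1)) / (1-t) ^ (α+1))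
        = ∫ x in Ioi (0:ℝ), (Ioo (0:ℝ) (1+ε)⁻¹).indicator
            (fun t => (t ^ (α-1) - t ^ (α-β-1)) / (1-t) ^ (α+1)) x by
      rw [setIntegral_indicator measurableSet_Ioo]
      congr 1
      rw [Set.inter_eq_right.mpr (fun y hy => hy.1)]]
    refine setIntegral_congr_fun measurableSet_Ioi fun x hx => ?_
    have hx0 : (0:ℝ) < x := hx
    have hεinv1 : ((1:ℝ)+ε)⁻¹ < 1 := inv_lt_one_of_one_lt₀ (by linarith)
    rw [abs_neg, abs_one, one_mul, Real.rpow_neg_one, smul_eq_mul]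
    by_cases hmem : x < (1+ε)⁻¹
    · have hinv : x⁻¹ ∈ Ioi (1+ε) := by
        exact mem_Ioi.mpr ((lt_inv_comm₀ hx0 (by linarith : (0:ℝ) < 1+ε)).mp hmem)
      rw [hF, Set.indicator_of_mem hinv, Set.indicator_of_mem (Set.mem_Ioo.mpr ⟨hx0, hmem⟩)]
      have := aux_h2_eq α β hx0 (lt_trans hmem hεinv1)
      rw [hf]
      rw [show x ^ ((-1:ℝ)-1) = x ^ ((-1:ℝ)-1) from rfl] at this ⊢
      exact this
    · have hinv : x⁻¹ ∉ Ioi (1+ε) := by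
        intro hc
        exact hmem ((lt_inv_comm₀ (by linarith : (0:ℝ) < 1+ε) hx0).mp hc)
      rw [hF, Set.indicator_of_notMem hinv, Set.indicator_of_notMem
        (fun hc => hmem hc.2), mul_zero]
  rw [← hL, key, hR]

lemma aux_main_eq (α β ε : ℝ) (hα0 : 0 < α) (hβ : -1 < β) (hβα : β < α)
    (hε0 : 0 < ε) (hε1 : ε < 1/2) :
    (∫ z in {z : ℝ | 0 < z ∧ ε ≤ |z - 1|}, (1 - z ^ β) / |1 - z| ^ (α + 1))
      = (∫ x : ℝ, (Ioc (0:ℝ) (1-ε)).indicator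
          (fun t => -((t ^ β - 1) * (1 - t ^ (α-β-1)) / (1-t) ^ (α+1))) x)
        + ∫ t in Ioo (1-ε) (1+ε)⁻¹, (t ^ (α-1) - t ^ (α-β-1)) / (1-t) ^ (α+1) := by
  have h2eps : (1:ℝ) - ε < (1+ε)⁻¹ := by
    rw [show ((1:ℝ)+ε)⁻¹ = 1/(1+ε) from (one_div _).symm, lt_div_iff₀ (by linarith)]
    nlinarith
  have hc1 : ((1:ℝ)+ε)⁻¹ < 1 := inv_lt_one_of_one_lt₀ (by linarith)
  have hc0 : (0:ℝ) ≤ (1+ε)⁻¹ := by positivity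
  have hset : {z : ℝ | 0 < z ∧ ε ≤ |z - 1|} = Ioc 0 (1-ε) ∪ Ici (1+ε) := by
    ext z
    simp only [Set.mem_setOf_eq, Set.mem_union, Set.mem_Ioc, Set.mem_Ici]
    constructor
    · rintro ⟨hz0, hz⟩
      rcases le_abs.mp hz with h | h
      · right; linarith
      · left; exact ⟨hz0, by linarith⟩
    · rintro (⟨hz0, hz⟩ | hz)
      · exact ⟨hz0, le_abs.mpr (Or.inr (by linarith))⟩
      · exact ⟨by linarith, le_abs.mpr (Or.inl (by linarith))⟩
  rw [hset]
  have hfIoc := aux_int_f_Ioc α β ε hα0 hβ hε0 (by linarith)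
  have hfIci : IntegrableOn (fun z : ℝ => (1 - z ^ β) / |1 - z| ^ (α+1)) (Ici (1+ε)) := by
    rw [integrableOn_Ici_iff_integrableOn_Ioi]
    exact aux_int_f_Ioi α β ε hα0 hβα hε0
  have hdisj : Disjoint (Ioc (0:ℝ) (1-ε)) (Ici (1+ε)) := by
    rw [Set.disjoint_left]
    intro t ht ht'
    have := ht.2; have := Set.mem_Ici.mp ht'; linarith
  rw [setIntegral_union hdisj measurableSet_Ici hfIoc hfIci,
    integral_Ici_eq_integral_Ioi, aux_subst α β ε hε0]
  have hh2a := aux_int_h2 α β (1-ε) hα0 hβα (by linarith) (by linarith)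
  have hh2b : IntegrableOn (fun t : ℝ => (t ^ (α-1) - t ^ (α-β-1)) / (1-t) ^ (α+1))
      (Ioo (1-ε) (1+ε)⁻¹) := by
    refine (aux_int_h2 α β ((1+ε)⁻¹) hα0 hβα hc0 hc1).mono_set fun t ht => ?_
    exact ⟨by linarith [ht.1], ht.2.le⟩
  have hdisj2 : Disjoint (Ioc (0:ℝ) (1-ε)) (Ioo (1-ε) (1+ε)⁻¹) := by
    rw [Set.disjoint_left]
    intro t ht ht'
    have := ht.2; have := ht'.1; linarith
  rw [← Set.Ioc_union_Ioo_eq_Ioo (by linarith : (0:ℝ) ≤ 1-ε) h2eps,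
    setIntegral_union hdisj2 measurableSet_Ioo hh2a hh2b, ← add_assoc]
  congr 1
  have hfh1 : (∫ z in Ioc (0:ℝ) (1-ε), (1 - z ^ β) / |1 - z| ^ (α+1))
      = ∫ t in Ioc (0:ℝ) (1-ε), (1 - t ^ β) / (1-t) ^ (α+1) := by
    refine setIntegral_congr_fun measurableSet_Ioc fun t ht => ?_
    rw [abs_of_nonneg (by linarith [ht.2] : (0:ℝ) ≤ 1 - t)]
  have hh1int : IntegrableOn (fun t : ℝ => (1 - t ^ β) / (1-t) ^ (α+1)) (Ioc 0 (1-ε)) := by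
    refine hfIoc.congr_fun (fun t ht => ?_) measurableSet_Ioc
    dsimp only
    rw [abs_of_nonneg (by linarith [ht.2] : (0:ℝ) ≤ 1 - t)]
  rw [hfh1, ← integral_add hh1int hh2a, integral_indicator measurableSet_Ioc]
  refine setIntegral_congr_fun measurableSet_Ioc fun t ht => ?_
  have ht0 : (0:ℝ) < t := ht.1
  have hnum : -((t ^ β - 1) * (1 - t ^ (α-β-1)))
      = (1 - t ^ β) + (t ^ (α-1) - t ^ (α-β-1)) := by
    have : t ^ β * t ^ (α-β-1) = t ^ (α-1) := by
      rw [← Real.rpow_add ht0]; congr 1; ring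
    nlinarith [this]
  rw [← add_div, ← neg_div, ← hnum]

lemma aux_tendstoA (α β : ℝ) (hα0 : 0 < α) (hα2 : α < 2) (hβ : -1 < β) (hβα : β < α) :
    Filter.Tendsto (fun ε : ℝ => ∫ x : ℝ, (Ioc (0:ℝ) (1-ε)).indicator
        (fun t => -((t ^ β - 1) * (1 - t ^ (α-β-1)) / (1-t) ^ (α+1))) x)
      (nhdsWithin 0 (Set.Ioi 0))
      (nhds (-(∫ t in Ioo (0:ℝ) 1, (t ^ β - 1) * (1 - t ^ (α-β-1)) / (1-t) ^ (α+1)))) := by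
  set g : ℝ → ℝ := fun t => (t ^ β - 1) * (1 - t ^ (α-β-1)) / (1-t) ^ (α+1) with hgdef
  have hg : Measurable g := by fun_prop
  have hI : (-(∫ t in Ioo (0:ℝ) 1, g t))
      = ∫ x : ℝ, (Ioo (0:ℝ) 1).indicator (fun t => -(g t)) x := by
    rw [integral_indicator measurableSet_Ioo, integral_neg]
  rw [hI]
  refine tendsto_integral_filter_of_dominated_convergence
    ((Ioo (0:ℝ) 1).indicator (fun t => |g t|)) ?_ ?_ ?_ ?_
  · exact Filter.Eventually.of_forall fun ε =>
      ((hg.neg).indicator measurableSet_Ioc).aestronglyMeasurable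
  · filter_upwards [Ioo_mem_nhdsGT (show (0:ℝ) < 1 by norm_num)] with ε hε
    refine Filter.Eventually.of_forall fun x => ?_
    by_cases hx : x ∈ Ioc (0:ℝ) (1-ε)
    · rw [Set.indicator_of_mem hx,
        Set.indicator_of_mem (show x ∈ Ioo (0:ℝ) 1 from ⟨hx.1, by linarith [hx.2, hε.1]⟩),
        norm_neg, Real.norm_eq_abs]
    · rw [Set.indicator_of_notMem hx, norm_zero]
      exact Set.indicator_nonneg (fun y _ => abs_nonneg _) x
  · rw [integrable_indicator_iff measurableSet_Ioo]
    exact (aux_int_g α β hα0 hα2 hβ hβα).abs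
  · refine Filter.Eventually.of_forall fun x => ?_
    by_cases hx : x ∈ Ioo (0:ℝ) 1
    · rw [Set.indicator_of_mem hx]
      refine Filter.Tendsto.congr' ?_ tendsto_const_nhds
      filter_upwards [Ioo_mem_nhdsGT (show (0:ℝ) < 1-x by linarith [hx.2])] with ε hε
      rw [Set.indicator_of_mem (show x ∈ Ioc (0:ℝ) (1-ε) from ⟨hx.1, by linarith [hε.2]⟩)]
    · rw [Set.indicator_of_notMem hx]
      refine Filter.Tendsto.congr' ?_ tendsto_const_nhds
      filter_upwards [self_mem_nhdsWithin] with ε hε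
      rw [Set.indicator_of_notMem]
      intro hc
      exact hx ⟨hc.1, lt_of_le_of_lt hc.2 (by linarith [Set.mem_Ioi.mp hε])⟩

lemma aux_tendstoB (α β : ℝ) (hα0 : 0 < α) (hα2 : α < 2) :
    Filter.Tendsto (fun ε : ℝ =>
        ∫ t in Ioo (1-ε) (1+ε)⁻¹, (t ^ (α-1) - t ^ (α-β-1)) / (1-t) ^ (α+1))
      (nhdsWithin 0 (Set.Ioi 0)) (nhds 0) := by
  obtain ⟨C, hC0, hC⟩ := aux_lip (-β)
  apply squeeze_zero_norm' (a := fun ε => (2*C*2^α) * ε ^ (2-α))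
  · filter_upwards [Ioo_mem_nhdsGT (show (0:ℝ) < 1/2 by norm_num)] with ε hε
    have hε0 : 0 < ε := hε.1
    have hε1 : ε < 1/2 := hε.2
    have h1ε : (0:ℝ) < 1 + ε := by linarith
    have hinvle : (1+ε)⁻¹ ≤ 1 - ε/2 := by
      rw [show ((1:ℝ)+ε)⁻¹ = 1/(1+ε) from (one_div _).symm, div_le_iff₀ h1ε]
      nlinarith
    have hCb : ∀ t ∈ Ioo (1-ε) (1+ε)⁻¹,
        ‖(t ^ (α-1) - t ^ (α-β-1)) / (1-t) ^ (α+1)‖ ≤ (2*C) * (ε/2) ^ (-α) := by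
      intro t ht
      have ht1 : t < 1 := lt_of_lt_of_le ht.2 (by linarith)
      have ht12 : 1/2 ≤ t := by linarith [ht.1]
      have ht0 : (0:ℝ) < t := by linarith
      have h1t : (0:ℝ) < 1 - t := by linarith
      have h1tb : ε/2 ≤ 1 - t := by linarith [ht.2]
      have hnum : |t ^ (α-1) - t ^ (α-β-1)| ≤ t ^ (α-1) * (C * (1-t)) := by
        have e : t ^ (α-1) - t ^ (α-β-1) = t ^ (α-1) * (1 - t ^ (-β)) := by
          rw [mul_sub, mul_one, ← Real.rpow_add ht0, show α-1 + -β = α-β-1 by ring]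
        rw [e, abs_mul, abs_of_nonneg (Real.rpow_nonneg ht0.le _)]
        apply mul_le_mul_of_nonneg_left _ (Real.rpow_nonneg ht0.le _)
        rw [abs_sub_comm]
        exact hC t ⟨ht12, ht1.le⟩
      have htp : t ^ (α-1) ≤ 2 := by
        rcases le_or_gt 1 α with h | h
        · have := Real.rpow_le_one ht0.le ht1.le (by linarith : (0:ℝ) ≤ α - 1); linarith
        · have h1 : t ^ (α-1) ≤ ((1:ℝ)/2) ^ (α-1) :=
            Real.rpow_le_rpow_of_nonpos (by norm_num) ht12 (by linarith)
          have h2 : ((1:ℝ)/2) ^ (α-1) = 2 ^ (1-α) := by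
            rw [show (1:ℝ)/2 = 2⁻¹ by norm_num, Real.inv_rpow (by norm_num : (0:ℝ) ≤ 2),
              ← Real.rpow_neg (by norm_num : (0:ℝ) ≤ 2), show -(α-1) = 1-α by ring]
          have h3 : (2:ℝ) ^ (1-α) ≤ 2 ^ (1:ℝ) :=
            Real.rpow_le_rpow_of_exponent_le one_le_two (by linarith)
          rw [Real.rpow_one] at h3
          linarith
      have hden := Real.rpow_add_one h1t.ne' α
      calc ‖(t ^ (α-1) - t ^ (α-β-1)) / (1-t) ^ (α+1)‖
          = |t ^ (α-1) - t ^ (α-β-1)| / (1-t) ^ (α+1) := by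
            rw [Real.norm_eq_abs, abs_div, abs_of_nonneg (Real.rpow_nonneg h1t.le _)]
        _ ≤ (2 * (C * (1-t))) / ((1-t) ^ α * (1-t)) := by
            rw [hden]
            apply div_le_div₀ (by positivity) ?_ (by positivity) le_rfl
            calc |t ^ (α-1) - t ^ (α-β-1)| ≤ t ^ (α-1) * (C * (1-t)) := hnum
              _ ≤ 2 * (C * (1-t)) := mul_le_mul_of_nonneg_right htp (by positivity)
        _ = (2*C) * (1-t) ^ (-α) := by
            rw [Real.rpow_neg h1t.le]
            field_simp
        _ ≤ (2*C) * (ε/2) ^ (-α) := by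
            apply mul_le_mul_of_nonneg_left _ (by positivity)
            exact Real.rpow_le_rpow_of_nonpos (by positivity) h1tb (by linarith)
    have hvol : (volume (Ioo (1-ε) (1+ε)⁻¹)).toReal ≤ ε^2 := by
      rw [Real.volume_Ioo, ENNReal.toReal_ofReal_eq_iff.mpr]
      · nlinarith [mul_inv_cancel₀ h1ε.ne']
      · nlinarith [mul_inv_cancel₀ h1ε.ne']
    have hbd := norm_setIntegral_le_of_norm_le_const (show volume (Ioo (1-ε) (1+ε)⁻¹) < ⊤ from measure_Ioo_lt_top)
      hCb
    calc ‖∫ t in Ioo (1-ε) (1+ε)⁻¹, (t ^ (α-1) - t ^ (α-β-1)) / (1-t) ^ (α+1)‖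
        ≤ (2*C) * (ε/2) ^ (-α) * (volume (Ioo (1-ε) (1+ε)⁻¹)).toReal := hbd
      _ ≤ (2*C) * (ε/2) ^ (-α) * ε^2 := by
          apply mul_le_mul_of_nonneg_left hvol (by positivity)
      _ = (2*C*2^α) * ε ^ (2-α) := by
          have e1 : (ε/2) ^ (-α) = ε ^ (-α) * 2 ^ α := by
            rw [Real.div_rpow hε0.le (by norm_num : (0:ℝ) ≤ 2), div_eq_mul_inv,
              show (((2:ℝ) ^ (-α))⁻¹) = 2 ^ α by
                rw [Real.rpow_neg (by norm_num : (0:ℝ) ≤ 2), inv_inv]]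
          have e2 : ε ^ (-α) * ε^2 = ε ^ (2-α) := by
            rw [show (ε^2 : ℝ) = ε ^ ((2:ℕ):ℝ) by rw [Real.rpow_natCast],
              ← Real.rpow_add hε0]
            congr 1; push_cast; ring
          rw [e1]
          calc 2*C*(ε ^ (-α) * 2^α)*ε^2 = (2*C*2^α)*(ε ^ (-α) * ε^2) := by ring
            _ = (2*C*2^α) * ε ^ (2-α) := by rw [e2]
  · have h0 : Filter.Tendsto (fun ε : ℝ => ε ^ (2-α)) (nhds 0) (nhds ((0:ℝ) ^ (2-α))) :=
      (Real.continuousAt_rpow_const 0 (2-α) (Or.inr (by linarith))).tendsto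
    rw [Real.zero_rpow (ne_of_gt (by linarith : (0:ℝ) < 2-α))] at h0
    have := (h0.mono_left (nhdsWithin_le_nhds (s := Set.Ioi (0:ℝ)))).const_mul (2*C*2^α)
    simpa using this

theorem stmt_10 (α β x : ℝ) (hα0 : 0 < α) (hα2 : α < 2) (hx : 0 < x)
    (hβ : -1 < β) (hβα : β < α) :
    Filter.Tendsto
      (fun ε : ℝ => ∫ z in {z : ℝ | 0 < z ∧ ε ≤ |z - 1|}, (1 - z ^ β) / |1 - z| ^ (α + 1))
      (nhdsWithin 0 (Set.Ioi 0))
      (nhds (-(∫ t in Set.Ioo (0 : ℝ) 1,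
        (t ^ β - 1) * (1 - t ^ (α - β - 1)) / (1 - t) ^ (α + 1)))) ∧
    (0 ≤ β * (α - β - 1) →
      ∫ t in Set.Ioo (0 : ℝ) 1,
        (t ^ β - 1) * (1 - t ^ (α - β - 1)) / (1 - t) ^ (α + 1) ≤ 0) := by
  constructor
  · have hA := aux_tendstoA α β hα0 hα2 hβ hβα
    have hB := aux_tendstoB α β hα0 hα2
    have hAB := hA.add hB
    rw [add_zero] at hAB
    apply Filter.Tendsto.congr' _ hAB
    filter_upwards [Ioo_mem_nhdsGT (show (0:ℝ) < 1/2 by norm_num)] with ε hε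
    exact (aux_main_eq α β ε hα0 hβ hβα hε.1 hε.2).symm
  · intro hsign
    apply integral_nonpos_of_ae
    refine ae_restrict_of_forall_mem measurableSet_Ioo fun t ht => ?_
    have ht0 : (0:ℝ) < t := ht.1
    have ht1 : t < 1 := ht.2
    apply div_nonpos_of_nonpos_of_nonneg _ (Real.rpow_nonneg (by linarith) _)
    rcases lt_trichotomy β 0 with hb | hb | hb
    · have hs : α - β - 1 ≤ 0 := by nlinarith
      have hx1 : 1 ≤ t ^ β :=
        Real.one_le_rpow_of_pos_of_le_one_of_nonpos ht0 ht1.le hb.le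
      have hx2 : 1 ≤ t ^ (α-β-1) :=
        Real.one_le_rpow_of_pos_of_le_one_of_nonpos ht0 ht1.le hs
      nlinarith [mul_nonneg (sub_nonneg.mpr hx1) (sub_nonneg.mpr hx2)]
    · simp [hb, Real.rpow_zero]
    · have hs : 0 ≤ α - β - 1 := by nlinarith
      have hx1 : t ^ β ≤ 1 := Real.rpow_le_one ht0.le ht1.le hb.le
      have hx2 : t ^ (α-β-1) ≤ 1 := Real.rpow_le_one ht0.le ht1.le hs
      nlinarith [mul_nonneg (sub_nonneg.mpr hx1) (sub_nonneg.mpr hx2)]
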